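/- arXiv:0705.0233 — 2 statements merged into one kernel-verified Lean document; each statement's English description precedes it below -/
import Mathlib

section
/- Let n agents with states x_i in R^m obey x_i' = sum_{j in N_i} a_{ij}(x_j - x_i) + sum_{q=1}^k b_i^q (x_0^q - x_i), where x_0^1,...,x_0^k in R^m are fixed leader positions, a_{ij} = a_{ji} >= 0, and b_i^q >= 0. If every connected component of the agent interaction graph contains an agent i with b_i^q > 0 for some q, then every solution converges, and each limit x_i* lies in the convex hull of {x_0^1,...,x_0^k}. -/
open Matrix Filter

open Finset

section aux
variable {n k : ℕ} (A : Matrix (Fin n) (Fin n) ℝ) (b : Fin n → Fin k → ℝ)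

/-- The affine vector field's linear part (negated): H y. -/
noncomputable def Hfun (y : Fin n → ℝ) : Fin n → ℝ :=
  fun i => (∑ q, b i q) * y i - ∑ j, A i j * (y j - y i)

/-- Quadratic form of H. -/
noncomputable def Qf (y : Fin n → ℝ) : ℝ := ∑ i, y i * Hfun A b y i

lemma Qf_eq (hsymm : ∀ i j, A i j = A j i) (y : Fin n → ℝ) :
    Qf A b y = (∑ i, ∑ j, A i j * (y i - y j)^2)/2 + ∑ i, (∑ q, b i q) * y i ^2 := by
  have swap : ∑ i, ∑ j, A i j * (y i * (y i - y j))
      = ∑ i, ∑ j, A i j * (y j * (y j - y i)) := by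
    rw [Finset.sum_comm]
    exact Finset.sum_congr rfl fun i _ => Finset.sum_congr rfl fun j _ => by rw [hsymm i j]
  have key : 2 * (∑ i, ∑ j, A i j * (y i * (y i - y j)))
      = ∑ i, ∑ j, A i j * (y i - y j)^2 := by
    rw [two_mul]
    nth_rewrite 2 [swap]
    rw [← Finset.sum_add_distrib]
    refine Finset.sum_congr rfl fun i _ => ?_
    rw [← Finset.sum_add_distrib]
    exact Finset.sum_congr rfl fun j _ => by ring
  have expand : Qf A b y = (∑ i, ∑ j, A i j * (y i * (y i - y j)))
      + ∑ i, (∑ q, b i q) * y i ^ 2 := by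
    unfold Qf Hfun
    rw [← Finset.sum_add_distrib]
    refine Finset.sum_congr rfl fun i _ => ?_
    have h1 : y i * ∑ j, A i j * (y j - y i) = -∑ j, A i j * (y i * (y i - y j)) := by
      rw [Finset.mul_sum, ← Finset.sum_neg_distrib]
      exact Finset.sum_congr rfl fun j _ => by ring
    rw [mul_sub, h1]; ring
  rw [expand, ← key]; ring

end aux
section aux2
variable {n k : ℕ} {A : Matrix (Fin n) (Fin n) ℝ} {b : Fin n → Fin k → ℝ}

lemma Qf_nonneg (hsymm : ∀ i j, A i j = A j i) (hnonneg : ∀ i j, 0 ≤ A i j)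
    (hb : ∀ i q, 0 ≤ b i q) (y : Fin n → ℝ) : 0 ≤ Qf A b y := by
  rw [Qf_eq A b hsymm]
  have h1 : 0 ≤ ∑ i, ∑ j, A i j * (y i - y j)^2 :=
    Finset.sum_nonneg fun i _ => Finset.sum_nonneg fun j _ =>
      mul_nonneg (hnonneg i j) (sq_nonneg _)
  have h2 : 0 ≤ ∑ i, (∑ q, b i q) * y i ^ 2 :=
    Finset.sum_nonneg fun i _ => mul_nonneg (Finset.sum_nonneg fun q _ => hb i q) (sq_nonneg _)
  linarith

lemma Qf_pos_def (hsymm : ∀ i j, A i j = A j i) (hnonneg : ∀ i j, 0 ≤ A i j)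
    (hb : ∀ i q, 0 ≤ b i q)
    (hcomp : ∀ i : Fin n, ∃ j : Fin n,
      Relation.ReflTransGen (fun a c => 0 < A a c) i j ∧ ∃ q, 0 < b j q)
    (y : Fin n → ℝ) (hQ : Qf A b y = 0) : y = 0 := by
  rw [Qf_eq A b hsymm] at hQ
  have h1 : 0 ≤ ∑ i, ∑ j, A i j * (y i - y j)^2 :=
    Finset.sum_nonneg fun i _ => Finset.sum_nonneg fun j _ =>
      mul_nonneg (hnonneg i j) (sq_nonneg _)
  have h2 : 0 ≤ ∑ i, (∑ q, b i q) * y i ^ 2 :=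
    Finset.sum_nonneg fun i _ => mul_nonneg (Finset.sum_nonneg fun q _ => hb i q) (sq_nonneg _)
  have hA0 : ∑ i, ∑ j, A i j * (y i - y j)^2 = 0 := by linarith
  have hB0 : ∑ i, (∑ q, b i q) * y i ^ 2 = 0 := by linarith
  have edge : ∀ i j, 0 < A i j → y i = y j := by
    intro i j hij
    have := (Finset.sum_eq_zero_iff_of_nonneg (fun i _ =>
      Finset.sum_nonneg fun j _ => mul_nonneg (hnonneg i j) (sq_nonneg _))).1 hA0 i (Finset.mem_univ i)
    have := (Finset.sum_eq_zero_iff_of_nonneg (fun j _ =>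
      mul_nonneg (hnonneg i j) (sq_nonneg _))).1 this j (Finset.mem_univ j)
    have h := mul_eq_zero.1 this
    rcases h with h | h
    · exact absurd h (ne_of_gt hij)
    · have := sq_eq_zero_iff.1 h; linarith
  have leader : ∀ j q, 0 < b j q → y j = 0 := by
    intro j q hq
    have := (Finset.sum_eq_zero_iff_of_nonneg (fun i _ =>
      mul_nonneg (Finset.sum_nonneg fun q _ => hb i q) (sq_nonneg _))).1 hB0 j (Finset.mem_univ j)
    have hpos : 0 < ∑ q, b j q :=
      lt_of_lt_of_le hq (Finset.single_le_sum (fun r _ => hb j r) (Finset.mem_univ q))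
    rcases mul_eq_zero.1 this with h | h
    · exact absurd h (ne_of_gt hpos)
    · exact sq_eq_zero_iff.1 h
  have path : ∀ i j : Fin n, Relation.ReflTransGen (fun a c => 0 < A a c) i j → y i = y j := by
    intro i j hpath
    induction hpath with
    | refl => rfl
    | tail _ hstep ih => exact ih.trans (edge _ _ hstep)
  funext i
  obtain ⟨j, hpath, q, hq⟩ := hcomp i
  simp only [Pi.zero_apply]
  rw [path i j hpath]; exact leader j q hq

lemma Qf_smul (c : ℝ) (y : Fin n → ℝ) : Qf A b (c • y) = c^2 * Qf A b y := by
  unfold Qf Hfun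
  rw [Finset.mul_sum]
  refine Finset.sum_congr rfl fun i _ => ?_
  simp only [Pi.smul_apply, smul_eq_mul]
  have h1 : ∀ j : Fin n, A i j * (c * y j - c * y i) = c * (A i j * (y j - y i)) := fun j => by ring
  rw [Finset.sum_congr rfl fun j _ => h1 j, ← Finset.mul_sum]
  ring

lemma Qf_coercive (hn : 0 < n) (hsymm : ∀ i j, A i j = A j i) (hnonneg : ∀ i j, 0 ≤ A i j)
    (hb : ∀ i q, 0 ≤ b i q)
    (hcomp : ∀ i : Fin n, ∃ j : Fin n,
      Relation.ReflTransGen (fun a c => 0 < A a c) i j ∧ ∃ q, 0 < b j q) :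
    ∃ lam : ℝ, 0 < lam ∧ ∀ y : Fin n → ℝ, lam * (∑ i, y i ^ 2) ≤ Qf A b y := by
  set S : Set (Fin n → ℝ) := {y | ∑ i, y i ^ 2 = 1} with hS
  have hcont : Continuous fun y : Fin n → ℝ => ∑ i, y i ^ 2 := by fun_prop
  have hQcont : Continuous fun y : Fin n → ℝ => Qf A b y := by
    unfold Qf Hfun; fun_prop
  have hclosed : IsClosed S := isClosed_eq hcont continuous_const
  have hbdd : Bornology.IsBounded S := by
    rw [Metric.isBounded_iff_subset_closedBall 0]
    refine ⟨1, fun y hy => ?_⟩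
    simp only [Metric.mem_closedBall, dist_zero_right]
    rw [pi_norm_le_iff_of_nonneg zero_le_one]
    intro i
    have h1 : y i ^ 2 ≤ 1 := by
      have := Finset.single_le_sum (fun j (_ : j ∈ Finset.univ) => sq_nonneg (y j)) (Finset.mem_univ i)
      rw [hy] at this; simpa using this
    rw [Real.norm_eq_abs]
    nlinarith [sq_abs (y i), abs_nonneg (y i)]
  have hcpt : IsCompact S := Metric.isCompact_of_isClosed_isBounded hclosed hbdd
  have hne : S.Nonempty := by
    refine ⟨fun i => if i = ⟨0, hn⟩ then 1 else 0, ?_⟩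
    simp only [S, Set.mem_setOf_eq]
    rw [Finset.sum_eq_single ⟨0, hn⟩]
    · simp
    · intro j _ hj; simp [hj]
    · simp
  obtain ⟨y0, hy0S, hmin⟩ := hcpt.exists_isMinOn hne hQcont.continuousOn
  have hy0ne : y0 ≠ 0 := by
    intro h
    rw [h] at hy0S
    simp only [S, Set.mem_setOf_eq, Pi.zero_apply] at hy0S
    simp at hy0S
  have hlam : 0 < Qf A b y0 := by
    rcases lt_or_eq_of_le (Qf_nonneg hsymm hnonneg hb y0) with h | h
    · exact h
    · exact absurd (Qf_pos_def hsymm hnonneg hb hcomp y0 h.symm) hy0ne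
  refine ⟨Qf A b y0, hlam, fun y => ?_⟩
  by_cases hy : y = 0
  · subst hy; simp [Qf, Hfun]
  · have hsum : 0 < ∑ i, y i ^ 2 := by
      rcases Function.ne_iff.1 hy with ⟨i, hi⟩
      have h1 : 0 < y i ^ 2 := by nlinarith [sq_nonneg (y i), sq_abs (y i), abs_pos.2 hi]
      have h2 := Finset.single_le_sum (fun j (_ : j ∈ Finset.univ) =>
        sq_nonneg (y j)) (Finset.mem_univ i)
      linarith
    set r := Real.sqrt (∑ i, y i ^ 2) with hr
    have hrpos : 0 < r := Real.sqrt_pos.2 hsum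
    have hmem : (r⁻¹ • y) ∈ S := by
      simp only [S, Set.mem_setOf_eq, Pi.smul_apply, smul_eq_mul]
      have : ∀ i : Fin n, (r⁻¹ * y i)^2 = r⁻¹^2 * y i ^2 := fun i => by ring
      rw [Finset.sum_congr rfl fun i _ => this i, ← Finset.mul_sum]
      rw [hr, sq, ← Real.sqrt_inv, Real.mul_self_sqrt (by positivity)]
      field_simp
    have hle : Qf A b y0 ≤ Qf A b (r⁻¹ • y) := hmin hmem
    rw [Qf_smul] at hle
    have hrr : r^2 = ∑ i, y i ^ 2 := Real.sq_sqrt hsum.le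
    have h2 : Qf A b y0 * r^2 ≤ Qf A b y := by
      have hr2 : (0:ℝ) < r^2 := by positivity
      have := mul_le_mul_of_nonneg_right hle hr2.le
      calc Qf A b y0 * r^2 ≤ r⁻¹^2 * Qf A b y * r^2 := this
        _ = Qf A b y := by field_simp
    rw [hrr] at h2; linarith

end aux2
section aux3
variable {n k : ℕ} (A : Matrix (Fin n) (Fin n) ℝ) (b : Fin n → Fin k → ℝ)

noncomputable def Hlin : (Fin n → ℝ) →ₗ[ℝ] (Fin n → ℝ) where
  toFun := Hfun A b
  map_add' y z := by
    funext i
    unfold Hfun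
    simp only [Pi.add_apply]
    have h1 : ∀ j : Fin n, A i j * (y j + z j - (y i + z i))
        = A i j * (y j - y i) + A i j * (z j - z i) := fun j => by ring
    rw [Finset.sum_congr rfl fun j _ => h1 j, Finset.sum_add_distrib]
    ring
  map_smul' c y := by
    funext i
    unfold Hfun
    simp only [Pi.smul_apply, smul_eq_mul, RingHom.id_apply]
    have h1 : ∀ j : Fin n, A i j * (c * y j - c * y i) = c * (A i j * (y j - y i)) :=
      fun j => by ring
    rw [Finset.sum_congr rfl fun j _ => h1 j, ← Finset.mul_sum]
    ring

lemma Hlin_surjective (hsymm : ∀ i j, A i j = A j i) (hnonneg : ∀ i j, 0 ≤ A i j)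
    (hb : ∀ i q, 0 ≤ b i q)
    (hcomp : ∀ i : Fin n, ∃ j : Fin n,
      Relation.ReflTransGen (fun a c => 0 < A a c) i j ∧ ∃ q, 0 < b j q) :
    Function.Surjective (Hlin A b) := by
  rw [← LinearMap.injective_iff_surjective]
  rw [injective_iff_map_eq_zero]
  intro y hy
  apply Qf_pos_def hsymm hnonneg hb hcomp
  unfold Qf
  have : Hfun A b y = 0 := hy
  rw [this]
  simp

end aux3
section aux4
variable {n k m : ℕ} {A : Matrix (Fin n) (Fin n) ℝ} {b : Fin n → Fin k → ℝ}
  {x₀ : Fin k → Fin m → ℝ}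

lemma equilibrium_in_hull (hk : 0 < k)
    (hnonneg : ∀ i j, 0 ≤ A i j) (hb : ∀ i q, 0 ≤ b i q)
    (hcomp : ∀ i : Fin n, ∃ j : Fin n,
      Relation.ReflTransGen (fun a c => 0 < A a c) i j ∧ ∃ q, 0 < b j q)
    (X : Fin n → Fin m → ℝ)
    (heq : ∀ i, (fun d => (∑ q, b i q) * X i d - ∑ j, A i j * (X j d - X i d))
      = fun d => ∑ q, b i q * x₀ q d) :
    ∀ i, X i ∈ convexHull ℝ (Set.range x₀) := by
  set C : Set (Fin m → ℝ) := convexHull ℝ (Set.range x₀) with hC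
  have hCconv : Convex ℝ C := convex_convexHull ℝ _
  have hCne : C.Nonempty := ⟨x₀ ⟨0, hk⟩, subset_convexHull ℝ _ ⟨⟨0, hk⟩, rfl⟩⟩
  have hCclosed : IsClosed C := ((Set.finite_range x₀).isCompact_convexHull ℝ).isClosed
  set dd : Fin n → ℝ := fun i => Metric.infDist (X i) C with hdd
  have hdd0 : ∀ i, 0 ≤ dd i := fun i => Metric.infDist_nonneg
  -- key convex combination identity
  have hXi : ∀ i : Fin n, 0 < (∑ j, A i j) + ∑ q, b i q →
      X i = (∑ j, (A i j / ((∑ j, A i j) + ∑ q, b i q)) • X j)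
          + ∑ q, (b i q / ((∑ j, A i j) + ∑ q, b i q)) • x₀ q := by
    intro i hs
    set s := (∑ j, A i j) + ∑ q, b i q with hsdef
    funext d
    have h1 := congrFun (heq i) d
    have h2 : ∑ j, A i j * (X j d - X i d)
        = (∑ j, A i j * X j d) - (∑ j, A i j) * X i d := by
      rw [Finset.sum_mul, ← Finset.sum_sub_distrib]
      exact Finset.sum_congr rfl fun j _ => by ring
    rw [h2] at h1
    have h3 : s * X i d = (∑ j, A i j * X j d) + ∑ q, b i q * x₀ q d := by
      rw [hsdef]; linarith
    simp only [Pi.add_apply, Finset.sum_apply, Pi.smul_apply, smul_eq_mul]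
    have hsne : s ≠ 0 := ne_of_gt hs
    field_simp
    rw [← Finset.sum_div, ← Finset.sum_div, ← add_div, eq_comm, div_eq_iff hsne]
    linarith [h3]
  -- key inequality
  have keyineq : ∀ i : Fin n,
      ((∑ j, A i j) + ∑ q, b i q) * dd i ≤ ∑ j, A i j * dd j := by
    intro i
    set s := (∑ j, A i j) + ∑ q, b i q with hsdef
    have hsnn : 0 ≤ s := add_nonneg (Finset.sum_nonneg fun j _ => hnonneg i j)
      (Finset.sum_nonneg fun q _ => hb i q)
    rcases eq_or_lt_of_le hsnn with hs0 | hs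
    · rw [← hs0]
      simp only [zero_mul]
      exact Finset.sum_nonneg fun j _ => mul_nonneg (hnonneg i j) (hdd0 j)
    · -- for every ε > 0
      have main : ∀ ε : ℝ, 0 < ε → s * dd i ≤ (∑ j, A i j * dd j) + (∑ j, A i j) * ε := by
        intro ε hε
        -- choose near points
        have hch : ∀ j : Fin n, ∃ p ∈ C, dist (X j) p < dd j + ε := by
          intro j
          rw [← Metric.infDist_lt_iff hCne]
          linarith [hdd0 j]
        choose p hpC hpd using hch
        set P : Fin m → ℝ := (∑ j, (A i j / s) • p j) + ∑ q, (b i q / s) • x₀ q with hP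
        have hPC : P ∈ C := by
          have := hCconv.sum_mem (t := (Finset.univ : Finset (Fin n ⊕ Fin k)))
            (w := Sum.elim (fun j => A i j / s) (fun q => b i q / s))
            (z := Sum.elim p x₀) ?_ ?_ ?_
          · rw [Fintype.sum_sum_type] at this
            simpa using this
          · rintro (j | q) _
            · exact div_nonneg (hnonneg i j) hsnn
            · exact div_nonneg (hb i q) hsnn
          · rw [Fintype.sum_sum_type]
            simp only [Sum.elim_inl, Sum.elim_inr]
            rw [← Finset.sum_div, ← Finset.sum_div, ← add_div, div_self (ne_of_gt hs)]
          · rintro (j | q) _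
            · exact hpC j
            · exact subset_convexHull ℝ _ ⟨q, rfl⟩
        have hdiff : X i - P = ∑ j, (A i j / s) • (X j - p j) := by
          rw [hXi i hs, hP]
          have : ((∑ j, (A i j / s) • X j) + ∑ q, (b i q / s) • x₀ q)
              - ((∑ j, (A i j / s) • p j) + ∑ q, (b i q / s) • x₀ q)
              = (∑ j, (A i j / s) • X j) - ∑ j, (A i j / s) • p j := by abel
          rw [this, ← Finset.sum_sub_distrib]
          exact Finset.sum_congr rfl fun j _ => (smul_sub _ _ _).symm
        have hbound : dist (X i) P ≤ ∑ j, (A i j / s) * (dd j + ε) := by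
          rw [dist_eq_norm, hdiff]
          refine le_trans (norm_sum_le _ _) (Finset.sum_le_sum fun j _ => ?_)
          rw [norm_smul, Real.norm_eq_abs, abs_of_nonneg (div_nonneg (hnonneg i j) hsnn)]
          refine mul_le_mul_of_nonneg_left ?_ (div_nonneg (hnonneg i j) hsnn)
          rw [← dist_eq_norm]
          exact (hpd j).le
        have hdi : dd i ≤ ∑ j, (A i j / s) * (dd j + ε) :=
          le_trans (Metric.infDist_le_dist_of_mem hPC) hbound
        have := mul_le_mul_of_nonneg_left hdi hsnn
        calc s * dd i ≤ s * ∑ j, (A i j / s) * (dd j + ε) := this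
          _ = ∑ j, A i j * (dd j + ε) := by
              rw [Finset.mul_sum]
              exact Finset.sum_congr rfl fun j _ => by
                field_simp
          _ = (∑ j, A i j * dd j) + (∑ j, A i j) * ε := by
              rw [Finset.sum_mul, ← Finset.sum_add_distrib]
              exact Finset.sum_congr rfl fun j _ => by ring
      -- let ε → 0
      by_contra hcon
      push_neg at hcon
      set δ := s * dd i - ∑ j, A i j * dd j with hδ
      have hδpos : 0 < δ := by simp only [hδ]; linarith
      have hAnn : 0 ≤ ∑ j, A i j := Finset.sum_nonneg fun j _ => hnonneg i j
      have := main (δ / ((∑ j, A i j) + 1)) (by positivity)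
      have hfrac : (∑ j, A i j) * (δ / ((∑ j, A i j) + 1)) < δ := by
        rw [mul_div_assoc']
        rw [div_lt_iff₀ (by linarith)]
        nlinarith
      simp only [hδ] at hfrac this
      linarith
  -- maximum principle
  intro i
  obtain ⟨i0, -, hi0⟩ := Finset.exists_max_image Finset.univ dd ⟨i, Finset.mem_univ i⟩
  set D := dd i0 with hD
  have hmax : ∀ j, dd j ≤ D := fun j => hi0 j (Finset.mem_univ j)
  have hD0 : D ≤ 0 := by
    by_contra hDpos
    push_neg at hDpos
    -- propagation along component
    have step : ∀ a c : Fin n, dd a = D → 0 < A a c → dd c = D := by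
      intro a c ha hac
      by_contra hne
      have hclt : dd c < D := lt_of_le_of_ne (hmax c) hne
      have h1 := keyineq a
      rw [ha] at h1
      have h2 : ∑ j, A a j * dd j < ∑ j, A a j * D := by
        refine Finset.sum_lt_sum (fun j _ => mul_le_mul_of_nonneg_left (hmax j) (hnonneg a j))
          ⟨c, Finset.mem_univ c, ?_⟩
        exact mul_lt_mul_of_pos_left hclt hac
      rw [← Finset.sum_mul] at h2
      have hbnn : 0 ≤ ∑ q, b a q := Finset.sum_nonneg fun q _ => hb a q
      nlinarith
    have prop : ∀ a c : Fin n, Relation.ReflTransGen (fun u v => 0 < A u v) a c →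
        dd a = D → dd c = D := by
      intro a c hpath
      induction hpath with
      | refl => exact id
      | tail _ hstep ih => exact fun h => step _ _ (ih h) hstep
    obtain ⟨j, hpath, q, hq⟩ := hcomp i0
    have hdj : dd j = D := prop i0 j hpath rfl
    have h1 := keyineq j
    rw [hdj] at h1
    have h2 : ∑ l, A j l * dd l ≤ (∑ l, A j l) * D := by
      rw [Finset.sum_mul]
      exact Finset.sum_le_sum fun l _ => mul_le_mul_of_nonneg_left (hmax l) (hnonneg j l)
    have hbq : 0 < ∑ r, b j r :=
      lt_of_lt_of_le hq (Finset.single_le_sum (fun r _ => hb j r) (Finset.mem_univ q))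
    nlinarith
  have : dd i = 0 := le_antisymm (le_trans (hmax i) hD0) (hdd0 i)
  exact (hCclosed.mem_iff_infDist_zero hCne).2 this

end aux4

/-- With the neighbor-based rule and multiple leaders, if every component of the agent
graph contains an agent linked to some leader, then every solution converges and each
limit position lies in the convex hull (polytope) of the leaders. -/
theorem agents_converge_to_leader_polytope
    (n k m : ℕ) (A : Matrix (Fin n) (Fin n) ℝ)
    (hsymm : ∀ i j, A i j = A j i)
    (hnonneg : ∀ i j, 0 ≤ A i j)
    (hdiag : ∀ i, A i i = 0)
    (b : Fin n → Fin k → ℝ) (hb : ∀ i q, 0 ≤ b i q)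
    (x₀ : Fin k → Fin m → ℝ)
    (hcomp : ∀ i : Fin n, ∃ j : Fin n,
      Relation.ReflTransGen (fun a c => 0 < A a c) i j ∧ ∃ q, 0 < b j q)
    (x : ℝ → Fin n → Fin m → ℝ)
    (hx : ∀ t, HasDerivAt x
      (fun i => (∑ j, A i j • (x t j - x t i)) + ∑ q, b i q • (x₀ q - x t i)) t) :
    ∃ xl : Fin n → Fin m → ℝ, Tendsto x atTop (nhds xl) ∧
      ∀ i, xl i ∈ convexHull ℝ (Set.range x₀) := by
  rcases Nat.eq_zero_or_pos n with hn | hn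
  · subst hn
    refine ⟨fun i => i.elim0, ?_, fun i => i.elim0⟩
    have hxc : x = fun _ => (fun i => i.elim0) := by
      funext t i; exact i.elim0
    rw [hxc]
    exact tendsto_const_nhds
  · have hk : 0 < k := by
      obtain ⟨j, -, q, -⟩ := hcomp ⟨0, hn⟩
      exact q.pos
    obtain ⟨lam, hlam, hco⟩ := Qf_coercive hn hsymm hnonneg hb hcomp
    have hsurj := Hlin_surjective A b hsymm hnonneg hb hcomp
    -- equilibrium
    have hsol : ∀ d : Fin m, ∃ y : Fin n → ℝ,
        Hfun A b y = fun i => ∑ q, b i q * x₀ q d := fun d => hsurj _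
    choose sol hsolspec using hsol
    set X : Fin n → Fin m → ℝ := fun i d => sol d i with hX
    have heq : ∀ i, (fun d => (∑ q, b i q) * X i d - ∑ j, A i j * (X j d - X i d))
        = fun d => ∑ q, b i q * x₀ q d := by
      intro i
      funext d
      exact congrFun (hsolspec d) i
    have hull := equilibrium_in_hull hk hnonneg hb hcomp X heq
    refine ⟨X, ?_, hull⟩
    -- convergence
    set y : ℝ → Fin n → Fin m → ℝ := fun t i d => x t i d - X i d with hy
    set g : ℝ → ℝ := fun t => ∑ i, ∑ d, (y t i d)^2 with hg
    set Fd : ℝ → Fin n → Fin m → ℝ := fun t i d =>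
      ((∑ j, A i j • (x t j - x t i)) + ∑ q, b i q • (x₀ q - x t i)) d with hFd
    set G : ℝ → ℝ := fun t => ∑ i, ∑ d, 2 * y t i d * Fd t i d with hG
    -- coordinatewise derivative
    have hderiv : ∀ t i d, HasDerivAt (fun t => x t i d) (Fd t i d) t := by
      intro t i d
      exact hasDerivAt_pi.1 (hasDerivAt_pi.1 (hx t) i) d
    have hgderiv : ∀ t, HasDerivAt g (G t) t := by
      intro t
      refine HasDerivAt.fun_sum fun i _ => ?_
      refine HasDerivAt.fun_sum fun d _ => ?_
      have h1 := ((hderiv t i d).sub_const (X i d)).fun_pow 2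
      simpa [hy, mul_comm, mul_assoc, mul_left_comm] using h1
    -- expression of Fd in terms of y
    have hFdy : ∀ t i d, Fd t i d = -(Hfun A b (fun j => y t j d)) i := by
      intro t i d
      have hsimp : Fd t i d = (∑ j, A i j * (x t j d - x t i d))
          + ∑ q, b i q * (x₀ q d - x t i d) := by
        simp [hFd, Finset.sum_apply, Pi.add_apply, Pi.smul_apply, Pi.sub_apply, smul_eq_mul]
      have h2 : ∑ j, A i j * (x t j d - x t i d)
          = (∑ j, A i j * (y t j d - y t i d)) + ∑ j, A i j * (X j d - X i d) := by
        rw [← Finset.sum_add_distrib]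
        refine Finset.sum_congr rfl fun j _ => ?_
        simp only [hy]; ring
      have h3 : ∑ q, b i q * (x₀ q d - x t i d)
          = (∑ q, b i q * x₀ q d) - (∑ q, b i q) * x t i d := by
        rw [Finset.sum_mul, ← Finset.sum_sub_distrib]
        exact Finset.sum_congr rfl fun q _ => by ring
      have h4 := congrFun (heq i) d
      rw [hsimp, h2, h3, ← h4]
      unfold Hfun
      simp only [hy]
      ring
    -- differential inequality
    have hGle : ∀ t, G t ≤ -(2*lam) * g t := by
      intro t
      have hswap : G t = ∑ d, ∑ i, 2 * y t i d * Fd t i d := by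
        rw [hG]; exact Finset.sum_comm
      have hgswap : g t = ∑ d, ∑ i, (y t i d)^2 := by
        rw [hg]; exact Finset.sum_comm
      rw [hswap, hgswap, Finset.mul_sum]
      refine Finset.sum_le_sum fun d _ => ?_
      have hQ : ∑ i, y t i d * Hfun A b (fun j => y t j d) i
          = Qf A b (fun j => y t j d) := rfl
      have hco' := hco (fun j => y t j d)
      calc ∑ i, 2 * y t i d * Fd t i d
          = -2 * ∑ i, y t i d * Hfun A b (fun j => y t j d) i := by
            rw [Finset.mul_sum]
            exact Finset.sum_congr rfl fun i _ => by rw [hFdy t i d]; ring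
        _ = -2 * Qf A b (fun j => y t j d) := by rw [hQ]
        _ ≤ -2 * (lam * ∑ i, (y t i d)^2) := by nlinarith
        _ = -(2*lam) * ∑ i, (y t i d)^2 := by ring
    -- Gronwall
    set h : ℝ → ℝ := fun t => g t * Real.exp (2*lam*t) with hh
    have hhd : ∀ t, HasDerivAt h
        (G t * Real.exp (2*lam*t) + g t * (Real.exp (2*lam*t) * (2*lam))) t := by
      intro t
      have hlin : HasDerivAt (fun t : ℝ => 2*lam*t) (2*lam) t := by
        simpa using (hasDerivAt_id t).const_mul (2*lam)
      exact (hgderiv t).mul ((Real.hasDerivAt_exp (2*lam*t)).comp t hlin)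
    have hanti : Antitone h := by
      refine antitone_of_deriv_nonpos (fun t => (hhd t).differentiableAt) fun t => ?_
      rw [(hhd t).deriv]
      have hE : 0 < Real.exp (2*lam*t) := Real.exp_pos _
      have := hGle t
      nlinarith
    have hgnn : ∀ t, 0 ≤ g t := fun t =>
      Finset.sum_nonneg fun i _ => Finset.sum_nonneg fun d _ => sq_nonneg _
    have hbound : ∀ t : ℝ, 0 ≤ t → g t ≤ g 0 * Real.exp (-(2*lam*t)) := by
      intro t ht
      have hE : 0 < Real.exp (2*lam*t) := Real.exp_pos _
      have h1 : g t * Real.exp (2*lam*t) ≤ g 0 := by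
        have h2 : h t ≤ h 0 := hanti ht
        simpa [hh, Real.exp_zero] using h2
      rw [Real.exp_neg, ← div_eq_mul_inv]
      exact (le_div_iff₀ hE).2 h1
    -- the bound tends to zero
    have hbt : Tendsto (fun t : ℝ => g 0 * Real.exp (-(2*lam*t))) atTop (nhds 0) := by
      have h1 : Tendsto (fun t : ℝ => 2*lam*t) atTop atTop :=
        Tendsto.const_mul_atTop (by positivity) tendsto_id
      have h2 : Tendsto (fun t : ℝ => -(2*lam*t)) atTop atBot :=
        tendsto_neg_atTop_atBot.comp h1
      have h3 : Tendsto (fun t : ℝ => Real.exp (-(2*lam*t))) atTop (nhds 0) :=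
        Real.tendsto_exp_atBot.comp h2
      simpa using h3.const_mul (g 0)
    have hgt0 : Tendsto g atTop (nhds 0) := by
      refine squeeze_zero' (Filter.Eventually.of_forall hgnn) ?_ hbt
      filter_upwards [eventually_ge_atTop (0:ℝ)] with t ht using hbound t ht
    rw [tendsto_pi_nhds]
    intro i
    rw [tendsto_pi_nhds]
    intro d
    have hsq : Tendsto (fun t => (y t i d)^2) atTop (nhds 0) := by
      refine squeeze_zero' (Filter.Eventually.of_forall fun t => sq_nonneg _)
        (Filter.Eventually.of_forall fun t => ?_) hgt0
      calc (y t i d)^2 ≤ ∑ e, (y t i e)^2 :=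
            Finset.single_le_sum (fun e (_ : e ∈ Finset.univ) => sq_nonneg (y t i e))
              (Finset.mem_univ d)
        _ ≤ g t := Finset.single_le_sum
              (fun j (_ : j ∈ Finset.univ) =>
                Finset.sum_nonneg fun e _ => sq_nonneg (y t j e))
              (Finset.mem_univ i)
    have habs : Tendsto (fun t => |x t i d - X i d|) atTop (nhds 0) := by
      have h1 : Tendsto (fun t => Real.sqrt ((y t i d)^2)) atTop (nhds (Real.sqrt 0)) :=
        (Real.continuous_sqrt.tendsto 0).comp hsq
      rw [Real.sqrt_zero] at h1
      refine h1.congr fun t => ?_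
      rw [Real.sqrt_sq_eq_abs]
    rw [tendsto_iff_dist_tendsto_zero]
    refine habs.congr fun t => ?_
    rw [Real.dist_eq]
end

section
/- Consider n agents on the real line with dynamics x' = -H x + B(1 x_0^1 + components for x_0^2) for two leaders at positions x_0^1 < x_0^2, with H = L + B^1 + B^2 positive definite. Then the equilibrium x* = H^{-1}(B^1 1 x_0^1 + B^2 1 x_0^2) satisfies x_0^1 <= x_i* <= x_0^2 for every agent i. -/
open Matrix

lemma upper_bound_aux
    (n : ℕ) (A : Matrix (Fin n) (Fin n) ℝ)
    (hnonneg : ∀ i j, 0 ≤ A i j)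
    (b₁ b₂ : Fin n → ℝ) (hb₁ : ∀ i, 0 ≤ b₁ i) (hb₂ : ∀ i, 0 ≤ b₂ i)
    (hcomp : ∀ i : Fin n, ∃ j : Fin n,
      Relation.ReflTransGen (fun a c => 0 < A a c) i j ∧ (0 < b₁ j ∨ 0 < b₂ j))
    (xa xb : ℝ) (hab : xa ≤ xb)
    (xs : Fin n → ℝ)
    (hrow : ∀ i, (b₁ i + b₂ i) * xs i + ∑ j, A i j * (xs i - xs j)
              = b₁ i * xa + b₂ i * xb) :
    ∀ i, xs i ≤ xb := by
  intro i
  obtain ⟨i₀, -, hmax⟩ := Finset.exists_max_image Finset.univ xs ⟨i, Finset.mem_univ i⟩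
  have hmax : ∀ j, xs j ≤ xs i₀ := fun j => hmax j (Finset.mem_univ j)
  have key : xs i₀ ≤ xb := by
    obtain ⟨j, hpath, hbj⟩ := hcomp i₀
    -- row analysis at any max vertex
    have rowan : ∀ a, xs a = xs i₀ →
        (0 < b₁ a + b₂ a → xs i₀ ≤ xb) ∧
        (b₁ a + b₂ a = 0 → ∀ c, 0 < A a c → xs c = xs i₀) := by
      intro a ha
      have hterm : ∀ c, 0 ≤ A a c * (xs a - xs c) := fun c =>
        mul_nonneg (hnonneg a c) (by rw [ha]; linarith [hmax c])
      have hS : 0 ≤ ∑ c, A a c * (xs a - xs c) :=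
        Finset.sum_nonneg fun c _ => hterm c
      constructor
      · intro hpos
        have h1 : (b₁ a + b₂ a) * xs i₀ ≤ b₁ a * xa + b₂ a * xb := by
          have h := hrow a
          have hS' := hS
          rw [ha] at h hS'; linarith
        have h2 : b₁ a * xa + b₂ a * xb ≤ (b₁ a + b₂ a) * xb := by
          nlinarith [hb₁ a]
        nlinarith
      · intro hz c hc
        have hb1 : b₁ a = 0 := le_antisymm (by linarith [hb₁ a, hb₂ a]) (hb₁ a)
        have hb2 : b₂ a = 0 := by linarith
        have hsum : ∑ c, A a c * (xs a - xs c) = 0 := by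
          have := hrow a; rw [hb1, hb2] at this; linarith
        have hzero : A a c * (xs a - xs c) = 0 := by
          have := (Finset.sum_eq_zero_iff_of_nonneg (fun c _ => hterm c)).mp hsum c
            (Finset.mem_univ c)
          exact this
        have : xs a - xs c = 0 := by
          rcases mul_eq_zero.mp hzero with h | h
          · exact absurd h (ne_of_gt hc)
          · exact h
        rw [← ha]; linarith
    -- induction along the path
    have main : ∀ a, Relation.ReflTransGen (fun a c => 0 < A a c) a j →
        xs a = xs i₀ → xs i₀ ≤ xb := by
      intro a hpath
      induction hpath using Relation.ReflTransGen.head_induction_on with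
      | refl =>
          intro ha
          rcases hbj with h | h
          · exact (rowan j ha).1 (by linarith [hb₂ j])
          · exact (rowan j ha).1 (by linarith [hb₁ j])
      | @head a c hac hcb ih =>
          intro ha
          by_cases hpos : 0 < b₁ a + b₂ a
          · exact (rowan a ha).1 hpos
          · have hz : b₁ a + b₂ a = 0 := by
              have := hb₁ a; have := hb₂ a
              push_neg at hpos; linarith
            exact ih ((rowan a ha).2 hz c hac)
    exact main i₀ hpath rfl
  exact le_trans (hmax i) key

/-- Scalar two-leader case: the equilibrium `x* = H⁻¹(B¹1 xa + B²1 xb)` satisfies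
`xa ≤ xᵢ* ≤ xb` for every agent `i`. -/
theorem two_leader_equilibrium_in_interval
    (n : ℕ) (A : Matrix (Fin n) (Fin n) ℝ)
    (hsymm : ∀ i j, A i j = A j i)
    (hnonneg : ∀ i j, 0 ≤ A i j)
    (hdiag : ∀ i, A i i = 0)
    (L : Matrix (Fin n) (Fin n) ℝ)
    (hL : L = Matrix.diagonal (fun i => ∑ j, A i j) - A)
    (b₁ b₂ : Fin n → ℝ) (hb₁ : ∀ i, 0 ≤ b₁ i) (hb₂ : ∀ i, 0 ≤ b₂ i)
    (hcomp : ∀ i : Fin n, ∃ j : Fin n,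
      Relation.ReflTransGen (fun a c => 0 < A a c) i j ∧ (0 < b₁ j ∨ 0 < b₂ j))
    (H : Matrix (Fin n) (Fin n) ℝ)
    (hH : H = L + Matrix.diagonal b₁ + Matrix.diagonal b₂)
    (hpd : H.PosDef)
    (xa xb : ℝ) (hlt : xa < xb)
    (xs : Fin n → ℝ)
    (hxs : xs = H⁻¹ *ᵥ (fun i => b₁ i * xa + b₂ i * xb)) :
    ∀ i, xa ≤ xs i ∧ xs i ≤ xb := by
  have hdet : IsUnit H.det := isUnit_iff_ne_zero.mpr (ne_of_gt hpd.det_pos)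
  have hHv : H *ᵥ xs = (fun i => b₁ i * xa + b₂ i * xb) := by
    rw [hxs, mulVec_mulVec, Matrix.mul_nonsing_inv H hdet, one_mulVec]
  have hrow : ∀ i, (b₁ i + b₂ i) * xs i + ∑ j, A i j * (xs i - xs j)
      = b₁ i * xa + b₂ i * xb := by
    intro i
    have h := congrFun hHv i
    rw [hH, hL] at h
    simp only [add_mulVec, sub_mulVec, mulVec_diagonal, Pi.add_apply, Pi.sub_apply] at h
    simp only [mulVec, dotProduct] at h
    have hs : ∑ j, A i j * (xs i - xs j)
        = (∑ j, A i j) * xs i - ∑ j, A i j * xs j := by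
      rw [Finset.sum_mul, ← Finset.sum_sub_distrib]
      exact Finset.sum_congr rfl fun j _ => by ring
    rw [hs]; linarith
  have hub := upper_bound_aux n A hnonneg b₁ b₂ hb₁ hb₂ hcomp xa xb hlt.le xs hrow
  have hcomp' : ∀ i : Fin n, ∃ j : Fin n,
      Relation.ReflTransGen (fun a c => 0 < A a c) i j ∧ (0 < b₂ j ∨ 0 < b₁ j) :=
    fun i => let ⟨j, hp, hb⟩ := hcomp i; ⟨j, hp, hb.symm⟩
  have hrow' : ∀ i, (b₂ i + b₁ i) * (fun k => -xs k) i
      + ∑ j, A i j * ((fun k => -xs k) i - (fun k => -xs k) j)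
      = b₂ i * (-xb) + b₁ i * (-xa) := by
    intro i
    have hs : ∑ j, A i j * (-xs i - -xs j) = -∑ j, A i j * (xs i - xs j) := by
      rw [← Finset.sum_neg_distrib]
      exact Finset.sum_congr rfl fun j _ => by ring
    simp only
    rw [hs]
    have := hrow i; linarith
  have hlb := upper_bound_aux n A hnonneg b₂ b₁ hb₂ hb₁ hcomp' (-xb) (-xa)
    (by linarith) (fun k => -xs k) hrow'
  intro i
  have h : -xs i ≤ -xa := hlb i
  exact ⟨by linarith, hub i⟩
end
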